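/- Let G be a commutative group written multiplicatively, q a prime, g ∈ G an element of order q, and h := g^w for some w ∈ ZMod q. If v₁, r₁, v₂, r₂ ∈ ZMod q satisfy g^{v₁}·h^{r₁} = g^{v₂}·h^{r₂} and (v₁, r₁) ≠ (v₂, r₂), then r₁ ≠ r₂ and w = (v₁ − v₂)·(r₂ − r₁)⁻¹. In other words, two distinct openings of the same Pedersen commitment determine the discrete logarithm of h in base g. -/
import Mathlib


/-- Two distinct openings of the same Pedersen commitment determine the
discrete logarithm of `h` in base `g`. -/
theorem pedersen_binding_dlog
    {G : Type*} [CommGroup G] {q : ℕ} (hq : q.Prime)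
    (g : G) (hg : orderOf g = q)
    (w : ZMod q) (h : G) (hh : h = g ^ (w.val))
    (v₁ r₁ v₂ r₂ : ZMod q)
    (heq : g ^ v₁.val * h ^ r₁.val = g ^ v₂.val * h ^ r₂.val)
    (hne : (v₁, r₁) ≠ (v₂, r₂)) :
    r₁ ≠ r₂ ∧ w = (v₁ - v₂) * (r₂ - r₁)⁻¹ := by
  haveI : Fact q.Prime := ⟨hq⟩
  subst hh
  rw [← pow_mul, ← pow_add, ← pow_mul, ← pow_add] at heq
  rw [pow_eq_pow_iff_modEq, hg, ← ZMod.natCast_eq_natCast_iff] at heq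
  push_cast at heq
  rw [ZMod.natCast_val, ZMod.natCast_val, ZMod.natCast_val, ZMod.natCast_val,
    ZMod.natCast_val, ZMod.cast_id, ZMod.cast_id, ZMod.cast_id, ZMod.cast_id,
    ZMod.cast_id] at heq
  -- heq : v₁ + w * r₁ = v₂ + w * r₂
  have hr : r₁ ≠ r₂ := by
    intro hr
    apply hne
    subst hr
    have : v₁ = v₂ := by
      have := heq
      linear_combination this
    simp [this]
  refine ⟨hr, ?_⟩
  have hsub : r₂ - r₁ ≠ 0 := sub_ne_zero.mpr (Ne.symm hr)
  field_simp
  linear_combination -heq
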